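/- Let k be a field, n a natural number, and Q an additive submonoid of ℤⁿ (equivalently, of Fin n → ℤ). Let F be a face of Q, i.e. an additive submonoid F ≤ Q such that whenever a, b ∈ Q and a + b ∈ F, then a ∈ F and b ∈ F. Then the ideal p_F of the monoid algebra k[Q] (the AddMonoidAlgebra of k over Q) spanned as a k-vector space by the monomials x^p with p ∈ Q \ F is a prime ideal, with quotient k[Q]/p_F isomorphic to the monoid algebra k[F]. -/

import Mathlib

open AddMonoidAlgebra
open scoped Classical

section Aux

variable {k : Type*} [Field k] {n : ℕ} (Q F : AddSubmonoid (Fin n → ℤ)) (hFQ : F ≤ Q)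
  (hface : ∀ a b : Fin n → ℤ, a ∈ Q → b ∈ Q → a + b ∈ F → a ∈ F ∧ b ∈ F)

/-- Kill monomials not in `F`, on the level of the monoid. -/
noncomputable def faceProj : Multiplicative Q →* AddMonoidAlgebra k F where
  toFun p := if h : (p.toAdd : Fin n → ℤ) ∈ F then AddMonoidAlgebra.single ⟨p.toAdd, h⟩ 1 else 0
  map_one' := by
    show dite _ _ _ = 1
    rw [dif_pos (by simpa using F.zero_mem : ((Multiplicative.toAdd 1 : Q) : Fin n → ℤ) ∈ F)]
    rw [AddMonoidAlgebra.one_def]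
    congr 1
  map_mul' p q := by
    by_cases hp : ((p.toAdd : Q) : Fin n → ℤ) ∈ F
    · by_cases hq : ((q.toAdd : Q) : Fin n → ℤ) ∈ F
      · have hpq : (((p * q).toAdd : Q) : Fin n → ℤ) ∈ F := F.add_mem hp hq
        show dite _ _ _ = dite _ _ _ * dite _ _ _
        rw [dif_pos hpq, dif_pos hp, dif_pos hq, AddMonoidAlgebra.single_mul_single, mul_one]
        congr 1
      · have hpq : ¬ (((p * q).toAdd : Q) : Fin n → ℤ) ∈ F := fun h =>
          hq (hface _ _ (p.toAdd).2 (q.toAdd).2 h).2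
        show dite _ _ _ = dite _ _ _ * dite _ _ _
        rw [dif_neg hpq, dif_neg hq, mul_zero]
    · have hpq : ¬ (((p * q).toAdd : Q) : Fin n → ℤ) ∈ F := fun h =>
        hp (hface _ _ (p.toAdd).2 (q.toAdd).2 h).1
      show dite _ _ _ = dite _ _ _ * dite _ _ _
      rw [dif_neg hpq, dif_neg hp, zero_mul]

lemma faceProj_apply (p : Multiplicative Q) :
    (faceProj Q F hface : Multiplicative Q →* AddMonoidAlgebra k F) p =
      if h : (p.toAdd : Fin n → ℤ) ∈ F then AddMonoidAlgebra.single ⟨p.toAdd, h⟩ 1 else 0 := by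
  rfl

end Aux

theorem face_ideal_isPrime_and_quotient_iso
    {k : Type*} [Field k] {n : ℕ}
    (Q F : AddSubmonoid (Fin n → ℤ)) (hFQ : F ≤ Q)
    (hface : ∀ a b : Fin n → ℤ, a ∈ Q → b ∈ Q → a + b ∈ F → a ∈ F ∧ b ∈ F) :
    (Ideal.span {x : AddMonoidAlgebra k Q |
        ∃ p : Q, (p : Fin n → ℤ) ∉ F ∧ x = AddMonoidAlgebra.single p 1}).IsPrime ∧
    Nonempty
      ((AddMonoidAlgebra k Q ⧸ Ideal.span {x : AddMonoidAlgebra k Q |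
          ∃ p : Q, (p : Fin n → ℤ) ∉ F ∧ x = AddMonoidAlgebra.single p 1}) ≃ₐ[k]
        AddMonoidAlgebra k F) := by
  classical
  set S : Set (AddMonoidAlgebra k Q) :=
    {x | ∃ p : Q, (p : Fin n → ℤ) ∉ F ∧ x = AddMonoidAlgebra.single p 1} with hS
  set φ : AddMonoidAlgebra k Q →ₐ[k] AddMonoidAlgebra k F :=
    AddMonoidAlgebra.lift k (AddMonoidAlgebra k F) Q (faceProj Q F hface) with hφ
  set ψ : AddMonoidAlgebra k F →ₐ[k] AddMonoidAlgebra k Q :=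
    AddMonoidAlgebra.mapDomainAlgHom k k (AddSubmonoid.inclusion hFQ) with hψ
  have hφ_single : ∀ (p : Q) (c : k),
      φ (AddMonoidAlgebra.single p c) =
        if h : (p : Fin n → ℤ) ∈ F then AddMonoidAlgebra.single ⟨p, h⟩ c else 0 := by
    intro p c
    rw [hφ, AddMonoidAlgebra.lift_single, faceProj_apply]
    simp only [toAdd_ofAdd]
    by_cases h : (p : Fin n → ℤ) ∈ F
    · rw [dif_pos h, dif_pos h, AddMonoidAlgebra.smul_single, smul_eq_mul, mul_one]
    · rw [dif_neg h, dif_neg h, smul_zero]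
  have hψ_single : ∀ (a : F) (c : k),
      ψ (AddMonoidAlgebra.single a c) =
        AddMonoidAlgebra.single (AddSubmonoid.inclusion hFQ a) c := by
    intro a c
    simp [hψ, AddMonoidAlgebra.mapDomainAlgHom, Finsupp.mapDomain_single]
  have hcomp : ∀ y, φ (ψ y) = y := by
    have key : φ.comp ψ = AlgHom.id k (AddMonoidAlgebra k F) := by
      apply AddMonoidAlgebra.algHom_ext
      intro a
      simp only [AlgHom.coe_comp, Function.comp_apply, AlgHom.id_apply]
      rw [hψ_single, hφ_single]
      have h' : ((AddSubmonoid.inclusion hFQ a : Q) : Fin n → ℤ) ∈ F := a.2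
      rw [dif_pos h']
      exact congrArg (fun z => AddMonoidAlgebra.single z (1:k)) (Subtype.ext rfl)
      exact Subsingleton.elim _ _
    intro y
    exact DFunLike.congr_fun key y
  have hsurj : Function.Surjective φ := fun y => ⟨ψ y, hcomp y⟩
  have hspan_mem : ∀ f : AddMonoidAlgebra k Q, f - ψ (φ f) ∈ Ideal.span S := by
    intro f
    induction f using AddMonoidAlgebra.induction_on with
    | of p =>
      have hof : (AddMonoidAlgebra.of k Q (Multiplicative.ofAdd p))
          = AddMonoidAlgebra.single p (1 : k) := rfl
      rw [hof, hφ_single]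
      by_cases h : (p : Fin n → ℤ) ∈ F
      · rw [dif_pos h, hψ_single]
        have : AddSubmonoid.inclusion hFQ ⟨(p : Fin n → ℤ), h⟩ = p := Subtype.ext rfl
        rw [this, sub_self]
        exact Ideal.zero_mem _
      · rw [dif_neg h, map_zero, sub_zero]
        exact Ideal.subset_span ⟨p, h, rfl⟩
    | add f g hf hg =>
      have : (f + g) - ψ (φ (f + g)) = (f - ψ (φ f)) + (g - ψ (φ g)) := by
        rw [map_add, map_add]; ring
      rw [this]; exact Ideal.add_mem _ hf hg
    | smul c f hf =>
      have : (c • f) - ψ (φ (c • f)) = c • (f - ψ (φ f)) := by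
        rw [map_smul, map_smul, smul_sub]
      rw [this, Algebra.smul_def]
      exact Ideal.mul_mem_left _ _ hf
  have hker : RingHom.ker φ = Ideal.span S := by
    apply le_antisymm
    · intro f hf
      rw [RingHom.mem_ker] at hf
      have := hspan_mem f
      rwa [hf, map_zero, sub_zero] at this
    · rw [Ideal.span_le]
      rintro x ⟨p, hp, rfl⟩
      rw [SetLike.mem_coe, RingHom.mem_ker, hφ_single, dif_neg hp]
  haveI : UniqueSums F := UniqueSums.of_injective_addHom F.subtype.toAddHom Subtype.coe_injective
    inferInstance
  haveI : IsDomain (AddMonoidAlgebra k F) := NoZeroDivisors.to_isDomain _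
  constructor
  · rw [← hker]
    exact RingHom.ker_isPrime φ
  · rw [← hker]
    exact ⟨Ideal.quotientKerAlgEquivOfSurjective hsurj⟩
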